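/- Let v ∈ V be nonzero and let α₀ ∈ R(v) be an exposed point of the convex hull of R(v), witnessed by H ∈ 𝔞 and h ∈ ℝ such that ⟨α, H⟩ ≥ h for all α ∈ R(v), with equality if and only if α = α₀. Then lim_{t → −∞} m_𝔞(exp(t·π(H))v) = α₀. -/

import Mathlib

open scoped InnerProductSpace
open Finset
open scoped Classical

/-- The (restricted) moment map of a linear family of operators `π` on an inner
product space `V`: `m v` is the unique element of `E` with
`⟪m v, X⟫ = ⟪π X v, v⟫ / ‖v‖²` for all `X`. -/
noncomputable def momentMap {E V : Type*} [NormedAddCommGroup E] [InnerProductSpace ℝ E]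
    [FiniteDimensional ℝ E] [NormedAddCommGroup V] [InnerProductSpace ℝ V]
    (π : E →ₗ[ℝ] V →L[ℝ] V) (v : V) : E :=
  (InnerProductSpace.toDual ℝ E).symm <| LinearMap.toContinuousLinearMap
    { toFun := fun X => ⟪(π X) v, v⟫_ℝ / ‖v‖ ^ 2
      map_add' := fun X Y => by
        simp [map_add, ContinuousLinearMap.add_apply, inner_add_left, add_div]
      map_smul' := fun c X => by
        simp [map_smul, ContinuousLinearMap.smul_apply, inner_smul_left, mul_div_assoc] }

lemma momentMap_inner {E V : Type*} [NormedAddCommGroup E] [InnerProductSpace ℝ E]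
    [FiniteDimensional ℝ E] [NormedAddCommGroup V] [InnerProductSpace ℝ V]
    (π : E →ₗ[ℝ] V →L[ℝ] V) (w : V) (X : E) :
    ⟪momentMap π w, X⟫_ℝ = ⟪(π X) w, w⟫_ℝ / ‖w‖ ^ 2 := by
  rw [momentMap, InnerProductSpace.toDual_symm_apply]
  rfl

lemma exp_eigen {V : Type*} [NormedAddCommGroup V] [InnerProductSpace ℝ V] [FiniteDimensional ℝ V]
    (A : V →L[ℝ] V) (w : V) (lam : ℝ) (hw : A w = lam • w) :
    NormedSpace.exp A w = Real.exp lam • w := by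
  have hpow : ∀ n : ℕ, (A ^ n) w = lam ^ n • w := by
    intro n; induction n with
    | zero => simp
    | succ n ih =>
      rw [pow_succ, pow_succ, ContinuousLinearMap.mul_apply, hw, map_smul, ih, smul_smul,
        mul_comm]
  have hs : Summable (fun n : ℕ => (Nat.factorial n : ℝ)⁻¹ • A ^ n) :=
    NormedSpace.expSeries_summable' A
  have h1 : NormedSpace.exp A w = ∑' n : ℕ, ((Nat.factorial n : ℝ)⁻¹ • A ^ n) w := by
    rw [NormedSpace.exp_eq_tsum ℝ]
    exact (ContinuousLinearMap.apply ℝ V w).map_tsum hs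
  rw [h1]
  have h2 : ∀ n : ℕ, ((Nat.factorial n : ℝ)⁻¹ • A ^ n) w
      = ((Nat.factorial n : ℝ)⁻¹ * lam ^ n) • w := by
    intro n
    rw [ContinuousLinearMap.smul_apply, hpow, smul_smul]
  simp_rw [h2]
  rw [Summable.tsum_smul_const ?_]
  · congr 1
    rw [Real.exp_eq_exp_ℝ, NormedSpace.exp_eq_tsum ℝ]
    simp [smul_eq_mul]
  · simpa [div_eq_inv_mul] using (Real.summable_pow_div_factorial lam)

/-- if `α₀ ∈ R(v)` is an exposed point of the convex hull of `R(v)`,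
witnessed by `H ∈ 𝔞` and `h ∈ ℝ`, then `m_𝔞(exp(t·π(H))v) → α₀` as `t → −∞`. -/
theorem momentMap_tendsto_exposed_point
    {𝔞 V : Type*} [NormedAddCommGroup 𝔞] [InnerProductSpace ℝ 𝔞] [FiniteDimensional ℝ 𝔞]
    [NormedAddCommGroup V] [InnerProductSpace ℝ V] [FiniteDimensional ℝ V]
    (π : 𝔞 →ₗ[ℝ] V →L[ℝ] V)
    (hsa : ∀ X : 𝔞, ∀ v w : V, ⟪(π X) v, w⟫_ℝ = ⟪v, (π X) w⟫_ℝ)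
    (hcomm : ∀ X Y : 𝔞, Commute (π X) (π Y))
    (ΔV : Finset 𝔞) (v : V) (hv : v ≠ 0)
    -- `c α` is the component of `v` in the weight space `V_α`:
    (c : 𝔞 → V)
    (hc : ∀ α ∈ ΔV, ∀ X : 𝔞, (π X) (c α) = ⟪α, X⟫_ℝ • c α)
    (hsum : v = ∑ α ∈ ΔV, c α)
    (Rv : Finset 𝔞) (hRv : Rv = ΔV.filter fun α => c α ≠ 0)
    (α₀ : 𝔞) (hα₀ : α₀ ∈ Rv)
    (H : 𝔞) (h : ℝ)
    (hlow : ∀ α ∈ Rv, h ≤ ⟪α, H⟫_ℝ)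
    (hexp : ∀ α ∈ Rv, (⟪α, H⟫_ℝ = h ↔ α = α₀)) :
    Filter.Tendsto (fun t : ℝ => momentMap π ((NormedSpace.exp (t • π H)) v))
      Filter.atBot (nhds α₀) := by
  have hα₀Δ : α₀ ∈ ΔV := by rw [hRv] at hα₀; exact (Finset.mem_filter.mp hα₀).1
  have hcα₀ : c α₀ ≠ 0 := by rw [hRv] at hα₀; exact (Finset.mem_filter.mp hα₀).2
  have hh : ⟪α₀, H⟫_ℝ = h := (hexp α₀ hα₀).mpr rfl
  -- orthogonality of the weight components
  have horth : ∀ α ∈ ΔV, ∀ β ∈ ΔV, α ≠ β → ⟪c α, c β⟫_ℝ = 0 := by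
    intro α hα β hβ hne
    have h1 : ⟪α, α - β⟫_ℝ * ⟪c α, c β⟫_ℝ = ⟪β, α - β⟫_ℝ * ⟪c α, c β⟫_ℝ := by
      have := hsa (α - β) (c α) (c β)
      rwa [hc α hα, hc β hβ, real_inner_smul_left, real_inner_smul_right] at this
    have h3 : ⟪α - β, α - β⟫_ℝ * ⟪c α, c β⟫_ℝ = 0 := by
      rw [inner_sub_left, sub_mul, h1, sub_self]
    rcases mul_eq_zero.mp h3 with h4 | h4
    · exact absurd (sub_eq_zero.mp ((inner_self_eq_zero (𝕜 := ℝ)).mp h4)) hne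
    · exact h4
  -- key inner product computation
  have hinner : ∀ a b : 𝔞 → ℝ,
      ⟪∑ α ∈ ΔV, a α • c α, ∑ β ∈ ΔV, b β • c β⟫_ℝ
        = ∑ α ∈ ΔV, a α * b α * ‖c α‖ ^ 2 := by
    intro a b
    rw [sum_inner]
    refine Finset.sum_congr rfl fun α hα => ?_
    rw [inner_sum]
    rw [Finset.sum_eq_single_of_mem α hα]
    · rw [real_inner_smul_left, real_inner_smul_right, real_inner_self_eq_norm_sq]; ring
    · intro β hβ hne
      rw [real_inner_smul_left, real_inner_smul_right, horth α hα β hβ (Ne.symm hne)]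
      ring
  -- the evolved vector
  set w : ℝ → V := fun t => ∑ α ∈ ΔV, Real.exp (t * ⟪α, H⟫_ℝ) • c α with hw
  have hwt : ∀ t : ℝ, (NormedSpace.exp (t • π H)) v = w t := by
    intro t
    rw [hsum, map_sum]
    refine Finset.sum_congr rfl fun α hα => ?_
    exact exp_eigen _ _ _ (by rw [ContinuousLinearMap.smul_apply, hc α hα H, smul_smul])
  -- numerator and denominator
  set N : ℝ → ℝ := fun t => ∑ α ∈ ΔV, Real.exp (t * ⟪α, H⟫_ℝ) ^ 2 * ‖c α‖ ^ 2 with hN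
  set S : ℝ → 𝔞 := fun t => ∑ α ∈ ΔV, (Real.exp (t * ⟪α, H⟫_ℝ) ^ 2 * ‖c α‖ ^ 2) • α with hS
  have hnorm : ∀ t : ℝ, ‖w t‖ ^ 2 = N t := by
    intro t
    rw [← real_inner_self_eq_norm_sq, hw, hinner]
    exact Finset.sum_congr rfl fun α _ => by ring
  have hm : ∀ t : ℝ, momentMap π (w t) = (N t)⁻¹ • S t := by
    intro t
    refine ext_inner_right ℝ fun X => ?_
    rw [momentMap_inner, hnorm]
    have hπw : (π X) (w t) = ∑ α ∈ ΔV, (Real.exp (t * ⟪α, H⟫_ℝ) * ⟪α, X⟫_ℝ) • c α := by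
      rw [hw, map_sum]
      refine Finset.sum_congr rfl fun α hα => ?_
      rw [map_smul, hc α hα, smul_smul]
    rw [hπw, hw, hinner, real_inner_smul_left, hS]
    simp only [sum_inner, real_inner_smul_left]
    rw [div_eq_inv_mul, Finset.mul_sum, Finset.mul_sum]
    exact Finset.sum_congr rfl fun α _ => by ring
  -- rescaled numerator and denominator
  set N' : ℝ → ℝ := fun t => ∑ α ∈ ΔV, Real.exp (2 * t * (⟪α, H⟫_ℝ - h)) * ‖c α‖ ^ 2 with hN'
  set S' : ℝ → 𝔞 := fun t =>
    ∑ α ∈ ΔV, (Real.exp (2 * t * (⟪α, H⟫_ℝ - h)) * ‖c α‖ ^ 2) • α with hS'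
  have hsc : ∀ t : ℝ, ∀ α : 𝔞,
      Real.exp (t * ⟪α, H⟫_ℝ) ^ 2 = Real.exp (2 * t * h) * Real.exp (2 * t * (⟪α, H⟫_ℝ - h)) := by
    intro t α
    rw [sq, ← Real.exp_add, ← Real.exp_add]
    congr 1; ring
  have hNE : ∀ t : ℝ, N t = Real.exp (2 * t * h) * N' t := by
    intro t
    rw [hN, hN', Finset.mul_sum]
    exact Finset.sum_congr rfl fun α _ => by rw [hsc t α]; ring
  have hSE : ∀ t : ℝ, S t = Real.exp (2 * t * h) • S' t := by
    intro t
    rw [hS, hS', Finset.smul_sum]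
    exact Finset.sum_congr rfl fun α _ => by rw [hsc t α, smul_smul, mul_assoc]
  have hresc : ∀ t : ℝ, (N t)⁻¹ • S t = (N' t)⁻¹ • S' t := by
    intro t
    have hE : Real.exp (2 * t * h) ≠ 0 := (Real.exp_pos _).ne'
    rw [hNE, hSE, mul_inv, smul_smul, mul_comm (Real.exp (2 * t * h))⁻¹ (N' t)⁻¹, mul_assoc,
      inv_mul_cancel₀ hE, mul_one]
  -- limits
  set L : ℝ := ‖c α₀‖ ^ 2 with hLdef
  have hL : 0 < L := pow_pos (norm_pos_iff.mpr hcα₀) 2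
  have hterm : ∀ α ∈ ΔV,
      Filter.Tendsto (fun t : ℝ => Real.exp (2 * t * (⟪α, H⟫_ℝ - h)) * ‖c α‖ ^ 2)
        Filter.atBot (nhds (if α = α₀ then L else 0)) := by
    intro α hα
    by_cases hc0 : c α = 0
    · have hne : α ≠ α₀ := fun he => hcα₀ (he ▸ hc0)
      rw [if_neg hne]
      simpa [hc0] using tendsto_const_nhds (α := ℝ) (x := (0:ℝ)) (f := Filter.atBot (α := ℝ))
    · have hαR : α ∈ Rv := by rw [hRv]; exact Finset.mem_filter.mpr ⟨hα, hc0⟩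
      by_cases he : α = α₀
      · rw [if_pos he, he, hh]
        simpa [hLdef] using tendsto_const_nhds (α := ℝ) (x := L) (f := Filter.atBot (α := ℝ))
      · rw [if_neg he]
        have hd : 0 < ⟪α, H⟫_ℝ - h :=
          sub_pos.mpr (lt_of_le_of_ne (hlow α hαR) (fun hle => he ((hexp α hαR).mp hle.symm)))
        have h1 : Filter.Tendsto (fun t : ℝ => 2 * t * (⟪α, H⟫_ℝ - h)) Filter.atBot
            Filter.atBot := by
          have := Filter.tendsto_id (α := ℝ) (x := Filter.atBot)
          have h2 : Filter.Tendsto (fun t : ℝ => (2 * (⟪α, H⟫_ℝ - h)) * t) Filter.atBot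
              Filter.atBot := (Filter.tendsto_id).const_mul_atBot (by positivity)
          refine h2.congr fun t => by ring
        have h3 : Filter.Tendsto (fun t : ℝ => Real.exp (2 * t * (⟪α, H⟫_ℝ - h)))
            Filter.atBot (nhds 0) := Real.tendsto_exp_atBot.comp h1
        simpa using h3.mul_const (‖c α‖ ^ 2)
  have hNlim : Filter.Tendsto N' Filter.atBot (nhds L) := by
    have := Filter.Tendsto.congr (f₁ := fun t => ∑ α ∈ ΔV,
      Real.exp (2 * t * (⟪α, H⟫_ℝ - h)) * ‖c α‖ ^ 2) (fun t => rfl)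
      (tendsto_finset_sum ΔV (fun α hα => hterm α hα))
    rw [Finset.sum_ite_eq' ΔV α₀ (fun _ => L), if_pos hα₀Δ] at this
    exact this
  have hSlim : Filter.Tendsto S' Filter.atBot (nhds (L • α₀)) := by
    have h1 := tendsto_finset_sum ΔV (fun α hα => (hterm α hα).smul_const α)
    have h2 : (∑ α ∈ ΔV, (if α = α₀ then L else 0) • α) = L • α₀ := by
      have h3 := Finset.sum_ite_eq' ΔV α₀ (fun α => L • α)
      rw [if_pos hα₀Δ] at h3
      rw [← h3]
      exact Finset.sum_congr rfl fun α _ => by by_cases he : α = α₀ <;> simp [he]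
    rw [h2] at h1
    exact h1
  have hfinal : Filter.Tendsto (fun t => (N' t)⁻¹ • S' t) Filter.atBot (nhds α₀) := by
    have := (hNlim.inv₀ hL.ne').smul hSlim
    rwa [inv_smul_smul₀ hL.ne'] at this
  refine hfinal.congr fun t => ?_
  rw [← hresc, ← hm, hwt]
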